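/- The following are equivalent: (c₁) 𝒩₁ := cone 𝒱 + ℝ₊(0_{X*},1) is a closed and convex subset of X*×ℝ (weak*-topology on X* times the usual topology on ℝ); (d₁) for every c ∈ X* with inf(RLIP_c) > −∞ there exist v̄ = (v̄¹,v̄²) ∈ 𝒱 and λ̄ ≥ 0 such that c = −λ̄v̄¹ and −λ̄v̄² = inf(RLIP_c) (stable robust strong duality for the pair (RLIP_c)–(RLID¹_c)). -/

import Mathlib

open Pointwise
open Topology

variable {X : Type*} [AddCommGroup X] [Module ℝ X] [TopologicalSpace X]
  [IsTopologicalAddGroup X] [ContinuousSMul ℝ X] [LocallyConvexSpace ℝ X] [T2Space X]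
  {T : Type*}

/-- The cone generated by a set `A`: `cone A = {λa : λ ≥ 0, a ∈ A}`. -/
def coneSet {E : Type*} [SMul ℝ E] (A : Set E) : Set E :=
  {p | ∃ l : ℝ, 0 ≤ l ∧ ∃ a ∈ A, p = l • a}

/-- The optimal value of the robust primal problem (RLIP_c). -/
noncomputable def infRLIP (U : T → Set (WeakDual ℝ X × ℝ)) (c : WeakDual ℝ X) : EReal :=
  ⨅ x : {x : X | ∀ t, ∀ v ∈ U t, v.1 x ≤ v.2}, ((c x.1 : ℝ) : EReal)

noncomputable instance {Y : Type*} [AddCommGroup Y] [Module ℝ Y] [TopologicalSpace Y]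
    [IsTopologicalAddGroup Y] [ContinuousSMul ℝ Y] : LocallyConvexSpace ℝ (WeakDual ℝ Y) :=
  WeakBilin.locallyConvexSpace (B := topDualPairing ℝ Y)

omit [LocallyConvexSpace ℝ X] [T2Space X] in
/-- Every continuous linear functional on the weak-* dual is evaluation at a point. -/
theorem weakdual_repr (f : WeakDual ℝ X →ₗ[ℝ] ℝ) (hf : Continuous f) :
    ∃ x : X, ∀ φ : WeakDual ℝ X, f φ = φ x := by
  classical
  set B := topDualPairing ℝ X with hB
  have hmem : f ⁻¹' Set.Ioo (-1 : ℝ) 1 ∈ 𝓝 (0 : WeakDual ℝ X) := by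
    have h0 : (0 : ℝ) ∈ Set.Ioo (-1 : ℝ) 1 := by constructor <;> norm_num
    have := hf.continuousAt (x := (0 : WeakDual ℝ X))
    exact this.preimage_mem_nhds (isOpen_Ioo.mem_nhds (by rw [map_zero]; exact h0))
  obtain ⟨Uu, hUu, hsub⟩ := (B.hasBasis_weakBilin).mem_iff.mp hmem
  obtain ⟨s, r, hr, rfl⟩ := (SeminormFamily.basisSets_iff _).mp hUu
  set L : s → (WeakDual ℝ X →ₗ[ℝ] ℝ) := fun i => B.flip (i : X) with hL
  have hker : ⨅ i, LinearMap.ker (L i) ≤ LinearMap.ker f := by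
    intro φ hφ
    simp only [Submodule.mem_iInf, LinearMap.mem_ker] at hφ
    have hzero : ∀ t : ℝ, f (t • φ) ∈ Set.Ioo (-1 : ℝ) 1 := by
      intro t
      apply hsub
      show t • φ ∈ Seminorm.ball (s.sup B.toSeminormFamily) 0 r
      refine (Seminorm.mem_ball_zero _).mpr ?_
      refine Seminorm.finset_sup_apply_lt hr ?_
      intro i hi
      have hφi : φ i = (0:ℝ) := hφ ⟨i, hi⟩
      refine lt_of_eq_of_lt (b := (0:ℝ)) ?_ hr
      show ‖(t • φ) i‖ = 0
      have h2 : (t • φ) i = t * φ i := rfl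
      rw [h2, hφi, mul_zero, norm_zero]
    by_contra hne
    have hne' : f φ ≠ 0 := hne
    have := hzero ((f φ)⁻¹)
    rw [map_smul, smul_eq_mul, inv_mul_cancel₀ hne'] at this
    exact absurd this.2 (lt_irrefl _)
  have hspan := mem_span_of_iInf_ker_le_ker (𝕜 := ℝ) hker
  obtain ⟨c, hc⟩ := (Submodule.mem_span_range_iff_exists_fun ℝ).mp hspan
  refine ⟨∑ i, c i • (i : X), fun φ => ?_⟩
  have := LinearMap.congr_fun hc φ
  rw [← this]
  simp only [LinearMap.coe_sum, Finset.sum_apply, LinearMap.smul_apply, smul_eq_mul]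
  rw [map_sum]
  refine Finset.sum_congr rfl fun i _ => ?_
  rw [map_smul, smul_eq_mul]
  rfl

/-- Theorem 4.1, case i = 1: the robust moment cone 𝒩₁ = cone 𝒱 + ℝ₊(0,1) is closed and
convex iff stable robust strong duality holds for the pair (RLIP_c)-(RLID¹_c). -/
theorem stmt11 [Nonempty T] (U : T → Set (WeakDual ℝ X × ℝ)) (hU : ∀ t, (U t).Nonempty)
    (hF : {x : X | ∀ t, ∀ v ∈ U t, v.1 x ≤ v.2}.Nonempty) :
    (IsClosed (coneSet (⋃ t, U t) + {p : WeakDual ℝ X × ℝ | p.1 = 0 ∧ 0 ≤ p.2}) ∧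
      Convex ℝ (coneSet (⋃ t, U t) + {p : WeakDual ℝ X × ℝ | p.1 = 0 ∧ 0 ≤ p.2})) ↔
    (∀ c : WeakDual ℝ X, ⊥ < infRLIP U c →
      ∃ v ∈ ⋃ t, U t, ∃ l : ℝ, 0 ≤ l ∧ c = -(l • v.1) ∧
        ((-(l * v.2) : ℝ) : EReal) = infRLIP U c) := by
  classical
  set V : Set (WeakDual ℝ X × ℝ) := ⋃ t, U t with hV
  set P : Set (WeakDual ℝ X × ℝ) := {p | p.1 = 0 ∧ 0 ≤ p.2} with hP
  set F : Set X := {x : X | ∀ t, ∀ v ∈ U t, v.1 x ≤ v.2} with hFdef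
  set N : Set (WeakDual ℝ X × ℝ) := coneSet V + P with hN
  -- weak duality: every element of N is a valid inequality on F
  have hweak : ∀ p ∈ N, ∀ x ∈ F, p.1 x ≤ p.2 := by
    rintro p ⟨q, ⟨l, hl, a, ha, rfl⟩, w, ⟨hw1, hw2⟩, rfl⟩ x hx
    obtain ⟨t, hat⟩ := Set.mem_iUnion.mp ha
    have hva : a.1 x ≤ a.2 := hx t a hat
    have e1 : (l • a + w).1 x = l * a.1 x + w.1 x := rfl
    have e2 : w.1 x = 0 := by rw [hw1]; rfl
    have e3 : (l • a + w).2 = l * a.2 + w.2 := rfl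
    have := mul_le_mul_of_nonneg_left hva hl
    rw [e1, e2, e3]; linarith
  obtain ⟨t₀⟩ := (inferInstance : Nonempty T)
  obtain ⟨a₀, ha₀⟩ := hU t₀
  have ha₀V : a₀ ∈ V := Set.mem_iUnion.mpr ⟨t₀, ha₀⟩
  have h0N : (0 : WeakDual ℝ X × ℝ) ∈ N := by
    have : (0 : WeakDual ℝ X × ℝ) + 0 ∈ coneSet V + P :=
      Set.add_mem_add ⟨0, le_refl 0, a₀, ha₀V, (zero_smul ℝ a₀).symm⟩ ⟨rfl, le_refl 0⟩
    simpa using this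
  have h01N : ((0 : WeakDual ℝ X), (1:ℝ)) ∈ N := by
    have : (0 : WeakDual ℝ X × ℝ) + ((0 : WeakDual ℝ X), (1:ℝ)) ∈ coneSet V + P :=
      Set.add_mem_add ⟨0, le_refl 0, a₀, ha₀V, (zero_smul ℝ a₀).symm⟩ ⟨rfl, zero_le_one⟩
    simpa using this
  have hVN : ∀ a ∈ V, a ∈ N := by
    intro a ha
    have : (1:ℝ) • a + 0 ∈ coneSet V + P :=
      Set.add_mem_add ⟨1, zero_le_one, a, ha, rfl⟩ ⟨rfl, le_refl 0⟩
    simpa using this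
  have hNsmul : ∀ (μ : ℝ), 0 ≤ μ → ∀ p ∈ N, μ • p ∈ N := by
    rintro μ hμ p ⟨q, ⟨l, hl, a, ha, rfl⟩, w, ⟨hw1, hw2⟩, rfl⟩
    have : (μ * l) • a + μ • w ∈ coneSet V + P := by
      refine Set.add_mem_add ⟨μ * l, mul_nonneg hμ hl, a, ha, rfl⟩ ⟨?_, ?_⟩
      · show μ • w.1 = 0; rw [hw1, smul_zero]
      · show (0:ℝ) ≤ μ • w.2; exact mul_nonneg hμ hw2
    have e : μ • (l • a + w) = (μ * l) • a + μ • w := by rw [smul_add, smul_smul]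
    rw [e]; exact this
  constructor
  · -- (c₁) ⇒ (d₁)
    rintro ⟨hclosed, hconvex⟩ c hc
    set m := infRLIP U c with hm
    have hmdef : m = ⨅ x : F, ((c x.1 : ℝ) : EReal) := rfl
    obtain ⟨x₀, hx₀⟩ := hF
    have hmle : ∀ x ∈ F, m ≤ ((c x : ℝ) : EReal) := by
      intro x hx
      rw [hmdef]
      exact iInf_le (fun x : F => ((c x.1 : ℝ) : EReal)) ⟨x, hx⟩
    have hmtop : m ≠ ⊤ := ((hmle x₀ hx₀).trans_lt (EReal.coe_lt_top _)).ne
    set μ := m.toReal with hμdef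
    have hμ : (μ : EReal) = m := EReal.coe_toReal hmtop hc.ne'
    have hμle : ∀ x ∈ F, μ ≤ c x := by
      intro x hx
      have := hmle x hx
      rw [← hμ] at this
      exact EReal.coe_le_coe_iff.mp this
    have hmemN : ((-c : WeakDual ℝ X), -μ) ∈ N := by
      by_contra hnot
      obtain ⟨g, u, hgu, hu⟩ := geometric_hahn_banach_closed_point hconvex hclosed hnot
      have hfc : Continuous ((g : (WeakDual ℝ X × ℝ) →ₗ[ℝ] ℝ).comp
          (LinearMap.inl ℝ (WeakDual ℝ X) ℝ)) := by
        exact g.continuous.comp (continuous_id.prodMk continuous_const)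
      obtain ⟨x₁, hx₁⟩ := weakdual_repr _ hfc
      have hx₁' : ∀ φ : WeakDual ℝ X, g (φ, 0) = φ x₁ := fun φ => hx₁ φ
      set β := g (0, 1) with hβdef
      have hg : ∀ p : WeakDual ℝ X × ℝ, g p = p.1 x₁ + p.2 * β := by
        intro p
        have hsplit : p = (p.1, 0) + p.2 • ((0 : WeakDual ℝ X), (1:ℝ)) := by
          apply Prod.ext <;> simp
        rw [hsplit, map_add, map_smul]
        rw [hx₁' p.1]
        simp [smul_eq_mul, hβdef]
      have hu0 : 0 < u := by
        have := hgu 0 h0N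
        rw [map_zero] at this
        exact this
      have hle0 : ∀ p ∈ N, p.1 x₁ + p.2 * β ≤ 0 := by
        intro p hp
        by_contra hpos
        push_neg at hpos
        set a := p.1 x₁ + p.2 * β with hadef
        have ha0 : 0 < a := hpos
        have hmem2 := hNsmul (u / a) (div_nonneg hu0.le ha0.le) p hp
        have := hgu _ hmem2
        rw [hg] at this
        have e : ((u / a) • p).1 x₁ + ((u / a) • p).2 * β = (u / a) * a := by
          show (u / a) * (p.1 x₁) + ((u / a) * p.2) * β = _
          rw [hadef]; ring
        rw [e, div_mul_cancel₀ u ha0.ne'] at this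
        exact absurd this (lt_irrefl u)
      have hβ : β ≤ 0 := by
        have h := hle0 _ h01N
        rw [show (((0:WeakDual ℝ X), (1:ℝ)) : WeakDual ℝ X × ℝ).1 x₁ = 0 from rfl] at h
        simpa using h
      have hVle : ∀ a ∈ V, a.1 x₁ + a.2 * β ≤ 0 := fun a ha => hle0 a (hVN a ha)
      have hgu' : u < -(c x₁) + (-μ) * β := by
        have := hu
        rw [hg] at this
        exact this
      rcases lt_or_eq_of_le hβ with hβlt | hβeq
      · -- β < 0
        have hb : 0 < -β := neg_pos.mpr hβlt
        set x₂ := (-β)⁻¹ • x₁ with hx₂def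
        have hx₂F : x₂ ∈ F := by
          intro t v hv
          have hle := hVle v (Set.mem_iUnion.mpr ⟨t, hv⟩)
          have e : v.1 x₂ = (-β)⁻¹ * v.1 x₁ := by rw [hx₂def, map_smul, smul_eq_mul]
          have h2 := mul_le_mul_of_nonneg_left hle (inv_nonneg.mpr hb.le)
          rw [mul_zero] at h2
          have hβne : β ≠ 0 := hβlt.ne
          have e2 : (-β)⁻¹ * (v.1 x₁ + v.2 * β) = (-β)⁻¹ * v.1 x₁ - v.2 := by
            have h4 : (-β)⁻¹ * (v.2 * β) = -v.2 := by
              rw [inv_neg, neg_mul, mul_comm v.2 β, ← mul_assoc, inv_mul_cancel₀ hβne, one_mul]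
            rw [mul_add, h4]; ring
          rw [e2] at h2
          rw [e]; linarith
        have hμ2 := hμle x₂ hx₂F
        have e : c x₂ = (-β)⁻¹ * c x₁ := by rw [hx₂def, map_smul, smul_eq_mul]
        rw [e] at hμ2
        have h3 := mul_le_mul_of_nonneg_left hμ2 hb.le
        rw [← mul_assoc, mul_inv_cancel₀ hb.ne', one_mul] at h3
        linarith
      · -- β = 0
        rw [hβeq] at hgu' hVle
        simp only [mul_zero, add_zero] at hgu' hVle
        have hcx1 : c x₁ < 0 := by linarith
        set s : ℝ := (c x₀ - μ + 1) / (-(c x₁)) with hsdef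
        have hs : 0 ≤ s := by
          apply div_nonneg
          · have := hμle x₀ hx₀; linarith
          · linarith
        have hxs : x₀ + s • x₁ ∈ F := by
          intro t v hv
          have h1 : v.1 x₀ ≤ v.2 := hx₀ t v hv
          have h2 : v.1 x₁ ≤ 0 := hVle v (Set.mem_iUnion.mpr ⟨t, hv⟩)
          have e : v.1 (x₀ + s • x₁) = v.1 x₀ + s * v.1 x₁ := by
            rw [map_add, map_smul, smul_eq_mul]
          rw [e]
          have h3 := mul_le_mul_of_nonneg_left h2 hs
          rw [mul_zero] at h3
          linarith
        have := hμle _ hxs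
        have e : c (x₀ + s • x₁) = c x₀ + s * c x₁ := by
          rw [map_add, map_smul, smul_eq_mul]
        rw [e] at this
        have e2 : s * c x₁ = -(c x₀ - μ + 1) := by
          rw [hsdef, div_neg, neg_mul, div_mul_cancel₀ _ hcx1.ne]
        rw [e2] at this
        linarith
    obtain ⟨q, ⟨l, hl, a, ha, rfl⟩, w, ⟨hw1, hw2⟩, hsum⟩ := hmemN
    refine ⟨a, ha, l, hl, ?_, ?_⟩
    · -- c = -(l • a.1)
      have h1 : (l • a + w).1 = -c := congrArg Prod.fst hsum
      have h2 : (l • a + w).1 = l • a.1 + w.1 := rfl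
      rw [h2, hw1, add_zero] at h1
      exact neg_eq_iff_eq_neg.mp h1.symm
    · -- value equality
      have h2 : (l • a + w).2 = -μ := congrArg Prod.snd hsum
      have h3 : (l • a + w).2 = l * a.2 + w.2 := rfl
      rw [h3] at h2
      -- weak duality: -(l * a.2) ≤ μ
      have hwd : -(l * a.2) ≤ μ := by
        have hall : ∀ x ∈ F, -(l * a.2) ≤ c x := by
          intro x hx
          have hva' : a.1 x ≤ a.2 := by
            obtain ⟨t, hat⟩ := Set.mem_iUnion.mp ha
            exact hx t a hat
          have hcx' : c x = -(l * a.1 x) := by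
            have h1 : (l • a + w).1 = -c := congrArg Prod.fst hsum
            have h2' : (l • a + w).1 = l • a.1 + w.1 := rfl
            rw [h2', hw1, add_zero] at h1
            have : c = -(l • a.1) := neg_eq_iff_eq_neg.mp h1.symm
            rw [this]; rfl
          have := mul_le_mul_of_nonneg_left hva' hl
          rw [hcx']; linarith
        have hle2 : ((-(l * a.2) : ℝ) : EReal) ≤ m := by
          rw [hmdef]
          exact le_iInf fun x => EReal.coe_le_coe_iff.mpr (hall x.1 x.2)
        rw [← hμ] at hle2
        exact EReal.coe_le_coe_iff.mp hle2
      have heq : -(l * a.2) = μ := by linarith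
      rw [heq, hμ]
  · -- (d₁) ⇒ (c₁)
    intro hd
    have hNK : N = {p : WeakDual ℝ X × ℝ | ∀ x ∈ F, p.1 x ≤ p.2} := by
      apply Set.Subset.antisymm
      · intro p hp x hx
        exact hweak p hp x hx
      · intro p hp
        set c : WeakDual ℝ X := -p.1 with hcdef
        have hbot : ⊥ < infRLIP U c := by
          have : ((-p.2 : ℝ) : EReal) ≤ infRLIP U c := by
            refine le_iInf fun x => EReal.coe_le_coe_iff.mpr ?_
            have := hp x.1 x.2
            show -p.2 ≤ (-p.1) x.1
            have e : (-p.1) x.1 = -(p.1 x.1) := rfl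
            rw [e]; linarith
          exact lt_of_lt_of_le (EReal.bot_lt_coe _) this
        obtain ⟨v, hv, l, hl, hceq, hval⟩ := hd c hbot
        have hp1 : p.1 = l • v.1 := by
          have : -p.1 = -(l • v.1) := hceq
          exact neg_injective this
        have hlv : l * v.2 ≤ p.2 := by
          have h1 : ((-p.2 : ℝ) : EReal) ≤ infRLIP U c := by
            refine le_iInf fun x => EReal.coe_le_coe_iff.mpr ?_
            have := hp x.1 x.2
            show -p.2 ≤ (-p.1) x.1
            have e : (-p.1) x.1 = -(p.1 x.1) := rfl
            rw [e]; linarith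
          rw [← hval] at h1
          have := EReal.coe_le_coe_iff.mp h1
          linarith
        have : l • v + ((0 : WeakDual ℝ X), p.2 - l * v.2) ∈ coneSet V + P :=
          Set.add_mem_add ⟨l, hl, v, hv, rfl⟩ ⟨rfl, sub_nonneg.mpr hlv⟩
        have e : l • v + ((0 : WeakDual ℝ X), p.2 - l * v.2) = p := by
          apply Prod.ext
          · show l • v.1 + 0 = p.1
            rw [add_zero, hp1]
          · show l * v.2 + (p.2 - l * v.2) = p.2
            ring
        rw [e] at this
        exact this
    rw [hN] at hNK ⊢
    rw [hNK]
    constructor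
    · have : {p : WeakDual ℝ X × ℝ | ∀ x ∈ F, p.1 x ≤ p.2} =
          ⋂ x ∈ F, {p : WeakDual ℝ X × ℝ | p.1 x ≤ p.2} := by
        ext p; simp
      rw [this]
      refine isClosed_biInter fun x _ => ?_
      exact isClosed_le ((WeakDual.eval_continuous x).comp continuous_fst) continuous_snd
    · intro p hp q hq α b hα hb hab
      intro x hx
      have h1 := hp x hx
      have h2 := hq x hx
      have e1 : (α • p + b • q).1 x = α * p.1 x + b * q.1 x := rfl
      have e2 : (α • p + b • q).2 = α * p.2 + b * q.2 := rfl
      rw [e1, e2]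
      have := mul_le_mul_of_nonneg_left h1 hα
      have := mul_le_mul_of_nonneg_left h2 hb
      linarith
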